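/- arXiv:2408.06363 — 4 statements merged into one kernel-verified Lean document; each statement's English description precedes it below -/
import Mathlib

section
/- Let G be a compact topological group acting on a finite-dimensional real vector space V by a continuous linear representation. Then every G-invariant subspace L of V admits a G-invariant complement, i.e., a G-invariant subspace M with L ⊕ M = V (L ∩ M = {0} and L + M = V). -/
open MeasureTheory

private lemma invariant_complement_normed
    {G E : Type*} [Group G] [TopologicalSpace G] [IsTopologicalGroup G] [CompactSpace G]
    [NormedAddCommGroup E] [NormedSpace ℝ E] [FiniteDimensional ℝ E]
    (ρ : Representation ℝ G E)
    (hcont : Continuous fun p : G × E => ρ p.1 p.2)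
    (L : Submodule ℝ E) (hL : ∀ (g : G), ∀ v ∈ L, ρ g v ∈ L) :
    ∃ M : Submodule ℝ E,
      (∀ (g : G), ∀ v ∈ M, ρ g v ∈ M) ∧ L ⊓ M = ⊥ ∧ L ⊔ M = ⊤ := by
  borelize G
  have hmul : ∀ (g h : G) (v : E), ρ g (ρ h v) = ρ (g * h) v := fun g h v => by
    rw [map_mul]; rfl
  set μ : Measure G := Measure.haarMeasure (⊤ : TopologicalSpace.PositiveCompacts G) with hμ
  have hprob : IsProbabilityMeasure μ := by
    constructor
    have h : (Set.univ : Set G) = ((⊤ : TopologicalSpace.PositiveCompacts G) : Set G) :=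
      (TopologicalSpace.PositiveCompacts.coe_top).symm
    rw [h, Measure.haarMeasure_self]
  -- a projection onto L
  obtain ⟨Q, hQ⟩ := Submodule.exists_isCompl L
  set π : E →ₗ[ℝ] E := L.subtype ∘ₗ L.linearProjOfIsCompl Q hQ with hπ
  have hπL : ∀ v ∈ L, π v = v := fun v hv => by
    simp [hπ]
    exact congrArg Subtype.val (Submodule.linearProjOfIsCompl_apply_left hQ ⟨v, hv⟩)
  have hπmem : ∀ v, π v ∈ L := fun v => by simp [hπ]
  have hπcont : Continuous π := π.continuous_of_finiteDimensional
  -- the averaged integrand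
  set f : G → E → E := fun g v => ρ g (π (ρ g⁻¹ v)) with hf
  have hfc : ∀ v, Continuous fun g => f g v := by
    intro v
    have h1 : Continuous fun g : G => ρ g⁻¹ v :=
      hcont.comp (continuous_inv.prodMk continuous_const)
    have h2 : Continuous fun g : G => π (ρ g⁻¹ v) := hπcont.comp h1
    exact hcont.comp (continuous_id.prodMk h2)
  have hfint : ∀ v, Integrable (fun g => f g v) μ :=
    fun v => (hfc v).integrable_of_hasCompactSupport (HasCompactSupport.of_compactSpace _)
  -- the averaged operator
  set P : E → E := fun v => ∫ g, f g v ∂μ with hP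
  have hPadd : ∀ v w, P (v + w) = P v + P w := by
    intro v w
    have h : ∀ g, f g (v + w) = f g v + f g w := by intro g; simp [hf]
    simp only [hP, h]
    exact integral_add (hfint v) (hfint w)
  have hPsmul : ∀ (c : ℝ) v, P (c • v) = c • P v := by
    intro c v
    have h : ∀ g, f g (c • v) = c • f g v := by intro g; simp [hf]
    simp only [hP, h]
    exact integral_smul c _
  set Plin : E →ₗ[ℝ] E :=
    { toFun := P, map_add' := hPadd, map_smul' := hPsmul } with hPlin
  have hPL : ∀ v, P v ∈ L := by
    intro v
    have hconv : Convex ℝ (L : Set E) := L.convex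
    have hclosed : IsClosed (L : Set E) := L.closed_of_finiteDimensional
    exact hconv.integral_mem hclosed
      (Filter.Eventually.of_forall fun g => hL g _ (hπmem _)) (hfint v)
  have hPfix : ∀ v ∈ L, P v = v := by
    intro v hv
    have h : ∀ g, f g v = v := by
      intro g
      have h1 : ρ g⁻¹ v ∈ L := hL g⁻¹ v hv
      show ρ g (π (ρ g⁻¹ v)) = v
      rw [hπL _ h1, hmul, mul_inv_cancel, map_one]
      rfl
    simp [hP, h, integral_const, measure_univ]
  have hPcomm : ∀ (h : G) v, P (ρ h v) = ρ h (P v) := by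
    intro h v
    have key : ∀ g, f (h * g) (ρ h v) = ρ h (f g v) := by
      intro g
      show ρ (h * g) (π (ρ (h * g)⁻¹ (ρ h v))) = ρ h (ρ g (π (ρ g⁻¹ v)))
      rw [hmul h g, hmul (h*g)⁻¹ h v]
      congr 2
      group
    have hinv : ∫ g, f (h * g) (ρ h v) ∂μ = ∫ g, f g (ρ h v) ∂μ :=
      integral_mul_left_eq_self (fun g => f g (ρ h v)) h
    have hρhcont : Continuous (ρ h) := (ρ h).continuous_of_finiteDimensional
    set T : E →L[ℝ] E := ⟨ρ h, hρhcont⟩ with hT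
    have hTc : ∫ g, ρ h (f g v) ∂μ = ρ h (∫ g, f g v ∂μ) :=
      T.integral_comp_comm (hfint v)
    calc P (ρ h v) = ∫ g, f (h * g) (ρ h v) ∂μ := hinv.symm
      _ = ∫ g, ρ h (f g v) ∂μ := by simp only [key]
      _ = ρ h (∫ g, f g v ∂μ) := hTc
      _ = ρ h (P v) := rfl
  refine ⟨LinearMap.ker Plin, ?_, ?_, ?_⟩
  · intro g v hv
    simp only [LinearMap.mem_ker] at hv ⊢
    show P (ρ g v) = 0
    rw [hPcomm g v]
    show ρ g (Plin v) = 0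
    rw [hv, map_zero]
  · rw [eq_bot_iff]
    rintro v ⟨hv1, hv2⟩
    have h1 : P v = v := hPfix v hv1
    have hv2' : P v = 0 := hv2
    have hv0 : v = 0 := h1.symm.trans hv2'
    rw [hv0]
    exact Submodule.zero_mem ⊥
  · rw [eq_top_iff]
    intro v _
    have h1 : P v ∈ L := hPL v
    have h2 : v - P v ∈ LinearMap.ker Plin := by
      simp only [LinearMap.mem_ker]
      have hsub : Plin (v - P v) = Plin v - Plin (P v) := map_sub Plin v (P v)
      show Plin (v - P v) = 0
      rw [hsub]
      show P v - P (P v) = 0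
      rw [hPfix _ h1, sub_self]
    have h3 : v = P v + (v - P v) := by abel
    rw [h3]
    exact Submodule.add_mem_sup h1 h2

/-- Let `G` be a compact topological group acting on a finite-dimensional
real vector space `V` by a continuous linear representation. Then every `G`-invariant
subspace `L` of `V` admits a `G`-invariant complement `M`, i.e., `L ⊓ M = ⊥` and
`L ⊔ M = ⊤`. -/
theorem invariant_complement
    {G V : Type*} [Group G] [TopologicalSpace G] [IsTopologicalGroup G] [CompactSpace G]
    [AddCommGroup V] [Module ℝ V] [FiniteDimensional ℝ V]
    [TopologicalSpace V] [IsTopologicalAddGroup V] [ContinuousSMul ℝ V] [T2Space V]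
    (ρ : Representation ℝ G V)
    (hcont : Continuous fun p : G × V => ρ p.1 p.2)
    (L : Submodule ℝ V) (hL : ∀ (g : G), ∀ v ∈ L, ρ g v ∈ L) :
    ∃ M : Submodule ℝ V,
      (∀ (g : G), ∀ v ∈ M, ρ g v ∈ M) ∧ L ⊓ M = ⊥ ∧ L ⊔ M = ⊤ := by
  -- transfer to a Euclidean model
  have hdim : Module.finrank ℝ V =
      Module.finrank ℝ (EuclideanSpace ℝ (Fin (Module.finrank ℝ V))) := by
    simp
  let e : V ≃ₗ[ℝ] EuclideanSpace ℝ (Fin (Module.finrank ℝ V)) :=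
    LinearEquiv.ofFinrankEq _ _ hdim
  have hecont : Continuous e := e.toLinearMap.continuous_of_finiteDimensional
  have hesymm : Continuous e.symm := e.symm.toLinearMap.continuous_of_finiteDimensional
  -- transported representation
  let ρ' : Representation ℝ G (EuclideanSpace ℝ (Fin (Module.finrank ℝ V))) :=
    { toFun := fun g => e.toLinearMap ∘ₗ (ρ g) ∘ₗ e.symm.toLinearMap
      map_one' := by ext v; simp
      map_mul' := fun g h => by ext v; simp [map_mul] }
  have hρ'app : ∀ g v, ρ' g v = e (ρ g (e.symm v)) := fun g v => rfl
  have hcont' : Continuous fun p : G × EuclideanSpace ℝ (Fin (Module.finrank ℝ V)) =>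
      ρ' p.1 p.2 := by
    simp only [hρ'app]
    exact hecont.comp (hcont.comp (continuous_fst.prodMk (hesymm.comp continuous_snd)))
  have hL' : ∀ (g : G), ∀ v ∈ L.map e.toLinearMap, ρ' g v ∈ L.map e.toLinearMap := by
    rintro g v ⟨w, hw, rfl⟩
    exact ⟨ρ g w, hL g w hw, by simp [hρ'app]⟩
  obtain ⟨M', hM'inv, hM'inf, hM'sup⟩ :=
    invariant_complement_normed ρ' hcont' (L.map e.toLinearMap) hL'
  have hLL : (L.map e.toLinearMap).map e.symm.toLinearMap = L := by
    ext v
    constructor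
    · rintro ⟨w, ⟨u, hu, rfl⟩, rfl⟩
      simpa using hu
    · intro hv
      exact ⟨e v, ⟨v, hv, rfl⟩, by simp⟩
  let F := Submodule.orderIsoMapComap
    (e.symm : EuclideanSpace ℝ (Fin (Module.finrank ℝ V)) ≃ₗ[ℝ] V)
  refine ⟨M'.map e.symm.toLinearMap, ?_, ?_, ?_⟩
  · rintro g v ⟨w, hw, rfl⟩
    refine ⟨ρ' g w, hM'inv g w hw, ?_⟩
    simp [hρ'app]
  · have h1 : L ⊓ M'.map e.symm.toLinearMap = F (L.map e.toLinearMap) ⊓ F M' := by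
      show _ = (L.map e.toLinearMap).map e.symm.toLinearMap ⊓ M'.map e.symm.toLinearMap
      rw [hLL]
    rw [h1, ← map_inf F, hM'inf]
    exact OrderIso.map_bot F
  · have h1 : L ⊔ M'.map e.symm.toLinearMap = F (L.map e.toLinearMap) ⊔ F M' := by
      show _ = (L.map e.toLinearMap).map e.symm.toLinearMap ⊔ M'.map e.symm.toLinearMap
      rw [hLL]
    rw [h1, ← map_sup F, hM'sup]
    exact OrderIso.map_top F
end

section
/- Let G be a compact topological group and let (V, ω) be a symplectic G-space. Let L be a G-invariant Lagrangian subspace of V and J a G-invariant isotropic subspace of V with L ∩ J = {0}. Then there exists a G-invariant Lagrangian subspace M of V with J ⊆ M, L ∩ M = {0}, and L + M = V. -/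
/-- The symplectic orthogonal `W^ω = {v : V | ∀ w ∈ W, ω v w = 0}` of a subspace `W`
with respect to a bilinear form `ω`. -/
def symplOrth {V : Type*} [AddCommGroup V] [Module ℝ V]
    (ω : V →ₗ[ℝ] V →ₗ[ℝ] ℝ) (W : Submodule ℝ V) : Submodule ℝ V where
  carrier := {v | ∀ w ∈ W, ω v w = 0}
  zero_mem' := by intro w hw; simp
  add_mem' := by intro a b ha hb w hw; simp [ha w hw, hb w hw]
  smul_mem' := by intro c a ha w hw; simp [ha w hw]

open MeasureTheory Module

lemma mem_symplOrth {V : Type*} [AddCommGroup V] [Module ℝ V]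
    (ω : V →ₗ[ℝ] V →ₗ[ℝ] ℝ) (W : Submodule ℝ V) (v : V) :
    v ∈ symplOrth ω W ↔ ∀ w ∈ W, ω v w = 0 := Iff.rfl

section SymplOrthLemmas

variable {V : Type*} [AddCommGroup V] [Module ℝ V] (ω : V →ₗ[ℝ] V →ₗ[ℝ] ℝ)

lemma symplOrth_eq_orthogonal (halt : ∀ v : V, ω v v = 0) (W : Submodule ℝ V) :
    symplOrth ω W = LinearMap.BilinForm.orthogonal ω W := by
  have hskew : ∀ v w : V, ω v w = - ω w v := by
    intro v w
    have h := halt (v + w)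
    simp only [map_add, LinearMap.add_apply] at h
    rw [halt v, halt w] at h
    linarith
  ext v
  rw [mem_symplOrth, LinearMap.BilinForm.mem_orthogonal_iff]
  constructor
  · intro h w hw
    show ω w v = 0
    rw [hskew, h w hw, neg_zero]
  · intro h w hw
    rw [hskew, h w hw, neg_zero]

variable [FiniteDimensional ℝ V]

lemma symplOrth_finrank (halt : ∀ v : V, ω v v = 0)
    (hnd : ∀ v : V, (∀ w : V, ω v w = 0) → v = 0) (W : Submodule ℝ V) :
    finrank ℝ (symplOrth ω W) = finrank ℝ V - finrank ℝ W := by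
  have hskew : ∀ v w : V, ω v w = - ω w v := by
    intro v w
    have h := halt (v + w)
    simp only [map_add, LinearMap.add_apply] at h
    rw [halt v, halt w] at h
    linarith
  have hrefl : LinearMap.IsRefl ω := by
    intro x y h
    rw [hskew, h, neg_zero]
  rw [symplOrth_eq_orthogonal ω halt]
  exact LinearMap.BilinForm.finrank_orthogonal (hrefl.nondegenerate_iff_separatingLeft.mpr hnd) W

lemma symplOrth_symplOrth (halt : ∀ v : V, ω v v = 0)
    (hnd : ∀ v : V, (∀ w : V, ω v w = 0) → v = 0) (W : Submodule ℝ V) :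
    symplOrth ω (symplOrth ω W) = W := by
  have hskew : ∀ v w : V, ω v w = - ω w v := by
    intro v w
    have h := halt (v + w)
    simp only [map_add, LinearMap.add_apply] at h
    rw [halt v, halt w] at h
    linarith
  have hrefl : LinearMap.IsRefl ω := by
    intro x y h
    rw [hskew, h, neg_zero]
  rw [symplOrth_eq_orthogonal ω halt, symplOrth_eq_orthogonal ω halt]
  exact LinearMap.BilinForm.orthogonal_orthogonal (hrefl.nondegenerate_iff_separatingLeft.mpr hnd) hrefl W

end SymplOrthLemmas

lemma exists_invariant_inner {G V : Type*} [Group G] [TopologicalSpace G] [IsTopologicalGroup G]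
    [CompactSpace G] [AddCommGroup V] [Module ℝ V] [FiniteDimensional ℝ V]
    [TopologicalSpace V] [IsTopologicalAddGroup V] [ContinuousSMul ℝ V] [T2Space V]
    (ρ : Representation ℝ G V)
    (hcont : Continuous fun p : G × V => ρ p.1 p.2) :
    ∃ B : V →ₗ[ℝ] V →ₗ[ℝ] ℝ, (∀ v w, B v w = B w v) ∧ (∀ v, v ≠ 0 → 0 < B v v) ∧
      (∀ g v w, B (ρ g v) (ρ g w) = B v w) := by
  borelize G
  let μ : Measure G := Measure.haar
  let b := Module.finBasis ℝ V
  let B₀ : V → V → ℝ := fun v w => ∑ i, b.repr v i * b.repr w i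
  have haddl : ∀ x x' y, B₀ (x + x') y = B₀ x y + B₀ x' y := by
    intro x x' y; simp [B₀, add_mul, Finset.sum_add_distrib]
  have hsmul : ∀ (c : ℝ) x y, B₀ (c • x) y = c * B₀ x y := by
    intro c x y; simp [B₀, Finset.mul_sum, mul_assoc]
  have hsymm : ∀ x y, B₀ x y = B₀ y x := by
    intro x y; simp [B₀, mul_comm]
  have hc1 : ∀ v : V, Continuous fun g : G => ρ g⁻¹ v := by
    intro v
    exact hcont.comp (continuous_inv.prodMk continuous_const)
  have hcoord : ∀ i, Continuous fun v : V => b.repr v i := by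
    intro i
    have := (b.coord i).continuous_of_finiteDimensional
    exact this
  have hf : ∀ v w : V, Continuous fun g : G => B₀ (ρ g⁻¹ v) (ρ g⁻¹ w) := by
    intro v w
    exact continuous_finset_sum _ fun i _ =>
      ((hcoord i).comp (hc1 v)).mul ((hcoord i).comp (hc1 w))
  have hint : ∀ v w : V, Integrable (fun g : G => B₀ (ρ g⁻¹ v) (ρ g⁻¹ w)) μ := by
    intro v w
    exact (hf v w).integrable_of_hasCompactSupport (HasCompactSupport.of_compactSpace _)
  refine ⟨LinearMap.mk₂ ℝ (fun v w => ∫ g, B₀ (ρ g⁻¹ v) (ρ g⁻¹ w) ∂μ) ?_ ?_ ?_ ?_, ?_, ?_, ?_⟩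
  · intro v v' w
    show (∫ g, B₀ (ρ g⁻¹ (v + v')) (ρ g⁻¹ w) ∂μ) = _
    rw [← integral_add (hint v w) (hint v' w)]
    congr 1; funext g; rw [map_add, haddl]
  · intro c v w
    show (∫ g, B₀ (ρ g⁻¹ (c • v)) (ρ g⁻¹ w) ∂μ) = _
    rw [← integral_smul]
    congr 1; funext g; rw [_root_.map_smul, hsmul]; rfl
  · intro v w w'
    show (∫ g, B₀ (ρ g⁻¹ v) (ρ g⁻¹ (w + w')) ∂μ) = _
    rw [← integral_add (hint v w) (hint v w')]
    congr 1; funext g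
    rw [map_add, hsymm, haddl, hsymm (ρ g⁻¹ w), hsymm (ρ g⁻¹ w')]
  · intro c v w
    show (∫ g, B₀ (ρ g⁻¹ v) (ρ g⁻¹ (c • w)) ∂μ) = _
    rw [← integral_smul]
    congr 1; funext g
    rw [_root_.map_smul, hsymm, hsmul, hsymm]; rfl
  · intro v w
    simp only [LinearMap.mk₂_apply]
    congr 1; funext g; exact hsymm _ _
  · intro v hv
    simp only [LinearMap.mk₂_apply]
    have hnn : ∀ g : G, 0 ≤ B₀ (ρ g⁻¹ v) (ρ g⁻¹ v) := by
      intro g; exact Finset.sum_nonneg fun i _ => mul_self_nonneg _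
    by_contra hle
    push_neg at hle
    have h0 : ∫ g, B₀ (ρ g⁻¹ v) (ρ g⁻¹ v) ∂μ = 0 :=
      le_antisymm hle (integral_nonneg hnn)
    have hae := (integral_eq_zero_iff_of_nonneg hnn (hint v v)).mp h0
    have heq : (fun g : G => B₀ (ρ g⁻¹ v) (ρ g⁻¹ v)) = 0 :=
      ((hf v v).ae_eq_iff_eq μ continuous_const).mp hae
    have h1 : B₀ v v > 0 := by
      obtain ⟨i, hi⟩ : ∃ i, b.repr v i ≠ 0 := by
        by_contra hrepr
        push_neg at hrepr
        apply hv
        have : b.repr v = 0 := by ext i; exact hrepr i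
        simpa using congrArg b.repr.symm this
      exact Finset.sum_pos' (fun j _ => mul_self_nonneg _)
        ⟨i, Finset.mem_univ i, mul_self_pos.mpr hi⟩
    have := congrFun heq 1
    simp only [inv_one, map_one, Module.End.one_apply, Pi.zero_apply] at this
    exact absurd this (ne_of_gt h1)
  · intro h v w
    simp only [LinearMap.mk₂_apply]
    have key : ∀ g : G, B₀ (ρ g⁻¹ (ρ h v)) (ρ g⁻¹ (ρ h w)) =
        B₀ (ρ (h⁻¹ * g)⁻¹ v) (ρ (h⁻¹ * g)⁻¹ w) := by
      intro g
      have : ∀ u : V, ρ g⁻¹ (ρ h u) = ρ (h⁻¹ * g)⁻¹ u := by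
        intro u
        rw [mul_inv_rev, inv_inv, map_mul]
        rfl
      rw [this v, this w]
    calc ∫ g, B₀ (ρ g⁻¹ (ρ h v)) (ρ g⁻¹ (ρ h w)) ∂μ
        = ∫ g, B₀ (ρ (h⁻¹ * g)⁻¹ v) (ρ (h⁻¹ * g)⁻¹ w) ∂μ := by
          congr 1; funext g; exact key g
      _ = ∫ g, B₀ (ρ g⁻¹ v) (ρ g⁻¹ w) ∂μ :=
          integral_mul_left_eq_self (fun g => B₀ (ρ g⁻¹ v) (ρ g⁻¹ w)) h⁻¹

/-- Let `G` be a compact topological group and `(V, ω)` a symplectic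
`G`-space. Let `L` be a `G`-invariant Lagrangian subspace and `J` a `G`-invariant
isotropic subspace with `L ⊓ J = ⊥`. Then there is a `G`-invariant Lagrangian subspace
`M` with `J ≤ M`, `L ⊓ M = ⊥` and `L ⊔ M = ⊤`. -/
theorem invariant_lagrangian_complement_containing_isotropic
    {G V : Type*} [Group G] [TopologicalSpace G] [IsTopologicalGroup G] [CompactSpace G]
    [AddCommGroup V] [Module ℝ V] [FiniteDimensional ℝ V]
    [TopologicalSpace V] [IsTopologicalAddGroup V] [ContinuousSMul ℝ V] [T2Space V]
    (ρ : Representation ℝ G V)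
    (hcont : Continuous fun p : G × V => ρ p.1 p.2)
    (ω : V →ₗ[ℝ] V →ₗ[ℝ] ℝ)
    (halt : ∀ v : V, ω v v = 0)
    (hnd : ∀ v : V, (∀ w : V, ω v w = 0) → v = 0)
    (hωinv : ∀ (g : G) (v w : V), ω (ρ g v) (ρ g w) = ω v w)
    (L J : Submodule ℝ V)
    (hLinv : ∀ (g : G), ∀ v ∈ L, ρ g v ∈ L)
    (hJinv : ∀ (g : G), ∀ v ∈ J, ρ g v ∈ J)
    (hLlag : symplOrth ω L = L)
    (hJiso : J ≤ symplOrth ω J)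
    (hLJ : L ⊓ J = ⊥) :
    ∃ M : Submodule ℝ V,
      (∀ (g : G), ∀ v ∈ M, ρ g v ∈ M) ∧
      symplOrth ω M = M ∧ J ≤ M ∧ L ⊓ M = ⊥ ∧ L ⊔ M = ⊤ := by
  classical
  obtain ⟨B, hBsymm, hBpos, hBinv⟩ := exists_invariant_inner ρ hcont
  have hskew : ∀ v w : V, ω v w = - ω w v := by
    intro v w
    have h := halt (v + w)
    simp only [map_add, LinearMap.add_apply] at h
    rw [halt v, halt w] at h
    linarith
  have hρinv : ∀ (g : G) (v : V), ρ g (ρ g⁻¹ v) = v := by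
    intro g v
    have h : ρ g * ρ g⁻¹ = 1 := by rw [← map_mul, mul_inv_cancel, map_one]
    calc ρ g (ρ g⁻¹ v) = (ρ g * ρ g⁻¹) v := rfl
      _ = v := by rw [h]; rfl
  have hωmove : ∀ (g : G) (v w : V), ω (ρ g v) w = ω v (ρ g⁻¹ w) := by
    intro g v w
    conv_lhs => rw [← hρinv g w]
    rw [hωinv]
  -- invariance of symplectic orthogonals
  have hOrthInv : ∀ (U : Submodule ℝ V), (∀ g, ∀ v ∈ U, ρ g v ∈ U) →
      ∀ g, ∀ v ∈ symplOrth ω U, ρ g v ∈ symplOrth ω U := by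
    intro U hU g v hv w hw
    rw [hωmove]
    exact hv _ (hU g⁻¹ w hw)
  have hBnd : ∀ v : V, (∀ w : V, B v w = 0) → v = 0 := by
    intro v hv
    by_contra h
    exact absurd (hv v) (ne_of_gt (hBpos v h))
  have hBrefl : LinearMap.IsRefl B := by
    intro x y h
    rw [hBsymm]; exact h
  -- the subspaces
  set W : Submodule ℝ V := symplOrth ω J with hWdef
  have hJW : J ≤ W := hJiso
  set S : Submodule ℝ V := (L ⊓ W) ⊔ J with hSdef
  set Bo : Submodule ℝ V := LinearMap.BilinForm.orthogonal B S with hBodef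
  set C : Submodule ℝ V := Bo ⊓ W with hCdef
  set N : Submodule ℝ V := J ⊔ C with hNdef
  have hSW : S ≤ W := sup_le inf_le_right hJW
  have hJN : J ≤ N := le_sup_left
  have hNW : N ≤ W := sup_le hJW inf_le_right
  have hJS : J ≤ S := le_sup_right
  have hSBo : S ⊓ Bo = ⊥ := by
    rw [eq_bot_iff]
    rintro x ⟨hxS, hxBo⟩
    have hx0 : B x x = 0 := (LinearMap.BilinForm.mem_orthogonal_iff.mp hxBo) x hxS
    rw [Submodule.mem_bot]
    by_contra h
    exact absurd hx0 (ne_of_gt (hBpos x h))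
  have hSsupBo : S ⊔ Bo = ⊤ := by
    apply Submodule.eq_top_of_finrank_eq
    have h1 := Submodule.finrank_sup_add_finrank_inf_eq S Bo
    rw [hSBo, finrank_bot, add_zero] at h1
    have h2 : finrank ℝ Bo = finrank ℝ V - finrank ℝ S :=
      LinearMap.BilinForm.finrank_orthogonal (hBrefl.nondegenerate_iff_separatingLeft.mpr hBnd) S
    have h3 : finrank ℝ S ≤ finrank ℝ V := Submodule.finrank_le S
    have h4 : finrank ℝ (S ⊔ Bo : Submodule ℝ V) ≤ finrank ℝ V := Submodule.finrank_le _
    omega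
  have hSCW : S ⊔ C = W := by
    have h := sup_inf_assoc_of_le (x := S) Bo hSW
    rw [hSsupBo, top_inf_eq] at h
    exact h.symm
  -- dimension of L
  have h2L : finrank ℝ L + finrank ℝ L = finrank ℝ V := by
    have := symplOrth_finrank ω halt hnd L
    rw [hLlag] at this
    have h3 : finrank ℝ L ≤ finrank ℝ V := Submodule.finrank_le L
    omega
  have hWJ : symplOrth ω W = J := symplOrth_symplOrth ω halt hnd J
  -- L ⊔ W = ⊤
  have hLW : L ⊔ W = ⊤ := by
    have h1 : symplOrth ω (L ⊔ W) = ⊥ := by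
      rw [eq_bot_iff]
      intro x hx
      rw [mem_symplOrth] at hx
      have hxL : x ∈ L := by
        rw [← hLlag, mem_symplOrth]
        intro w hw
        exact hx w (Submodule.mem_sup_left hw)
      have hxJ : x ∈ J := by
        rw [← hWJ, mem_symplOrth]
        intro w hw
        exact hx w (Submodule.mem_sup_right hw)
      rw [← hLJ]
      exact ⟨hxL, hxJ⟩
    apply Submodule.eq_top_of_finrank_eq
    have h2 := symplOrth_finrank ω halt hnd (L ⊔ W)
    rw [h1, finrank_bot] at h2
    have h3 : finrank ℝ (L ⊔ W : Submodule ℝ V) ≤ finrank ℝ V := Submodule.finrank_le _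
    omega
  -- L ⊓ N = ⊥
  have hLN : L ⊓ N = ⊥ := by
    rw [eq_bot_iff]
    rintro x ⟨hxL, hxN⟩
    have hxW : x ∈ W := hNW hxN
    have hxS : x ∈ S := Submodule.mem_sup_left ⟨hxL, hxW⟩
    obtain ⟨j, hj, c, hc, hx⟩ := Submodule.mem_sup.mp hxN
    have hcS : c ∈ S := by
      have h : c = x - j := by rw [← hx]; abel
      rw [h]
      exact Submodule.sub_mem S hxS (hJS hj)
    have hc0 : c = 0 := by
      have : c ∈ S ⊓ Bo := ⟨hcS, hc.1⟩
      rwa [hSBo, Submodule.mem_bot] at this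
    have hxJ : x ∈ J := by rw [← hx, hc0, add_zero]; exact hj
    rw [← hLJ]
    exact ⟨hxL, hxJ⟩
  -- L ⊔ N = ⊤
  have hLsupN : L ⊔ N = ⊤ := by
    rw [eq_top_iff, ← hLW]
    apply sup_le le_sup_left
    rw [← hSCW]
    apply sup_le
    · apply sup_le
      · exact le_trans inf_le_left le_sup_left
      · exact le_trans hJN le_sup_right
    · exact le_trans (le_sup_right : C ≤ N) le_sup_right
  -- invariance of N
  have hSupInv : ∀ (A A' : Submodule ℝ V), (∀ g, ∀ v ∈ A, ρ g v ∈ A) →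
      (∀ g, ∀ v ∈ A', ρ g v ∈ A') → ∀ g, ∀ v ∈ A ⊔ A', ρ g v ∈ A ⊔ A' := by
    intro A A' hA hA' g v hv
    obtain ⟨a, ha, b, hb, rfl⟩ := Submodule.mem_sup.mp hv
    rw [map_add]
    exact Submodule.add_mem _ (Submodule.mem_sup_left (hA g a ha))
      (Submodule.mem_sup_right (hA' g b hb))
  have hWinv : ∀ g, ∀ v ∈ W, ρ g v ∈ W := hOrthInv J hJinv
  have hSinv : ∀ g, ∀ v ∈ S, ρ g v ∈ S := by
    apply hSupInv
    · intro g v hv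
      exact ⟨hLinv g v hv.1, hWinv g v hv.2⟩
    · exact hJinv
  have hBoInv : ∀ g, ∀ v ∈ Bo, ρ g v ∈ Bo := by
    intro g v hv
    rw [hBodef, LinearMap.BilinForm.mem_orthogonal_iff]
    intro n hn
    show B n (ρ g v) = 0
    have h1 : B n (ρ g v) = B (ρ g⁻¹ n) v := by
      conv_lhs => rw [← hρinv g n]
      rw [hBinv]
    rw [h1]
    have h2 : ρ g⁻¹ n ∈ S := hSinv g⁻¹ n hn
    have := (LinearMap.BilinForm.mem_orthogonal_iff.mp hv) _ h2
    exact this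
  have hNinv : ∀ g, ∀ v ∈ N, ρ g v ∈ N := by
    apply hSupInv
    · exact hJinv
    · intro g v hv
      exact ⟨hBoInv g v hv.1, hWinv g v hv.2⟩
  -- dimension of N
  have hdimN : finrank ℝ N = finrank ℝ L := by
    have h1 := Submodule.finrank_sup_add_finrank_inf_eq L N
    rw [hLsupN, hLN, finrank_bot, finrank_top, add_zero] at h1
    omega
  -- the pairing L × N → ℝ
  let e : ↥L →ₗ[ℝ] (↥N →ₗ[ℝ] ℝ) :=
    { toFun := fun l => (ω l.1).comp N.subtype
      map_add' := by intro x y; ext n; simp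
      map_smul' := by intro c x; ext n; simp }
  have he_apply : ∀ (l : ↥L) (n : ↥N), e l n = ω l.1 n.1 := fun l n => rfl
  have he_inj : Function.Injective e := by
    rw [← LinearMap.ker_eq_bot, eq_bot_iff]
    intro l hl
    rw [LinearMap.mem_ker] at hl
    have hN0 : ∀ x ∈ N, ω l.1 x = 0 := by
      intro x hx
      have := LinearMap.congr_fun hl (⟨x, hx⟩ : ↥N)
      exact this
    have hL0 : ∀ x ∈ L, ω l.1 x = 0 := hLlag.ge l.2
    have hall : ∀ x : V, ω l.1 x = 0 := by
      intro x
      have hx : x ∈ L ⊔ N := by rw [hLsupN]; exact Submodule.mem_top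
      obtain ⟨a, ha, b, hb, rfl⟩ := Submodule.mem_sup.mp hx
      rw [map_add, hL0 a ha, hN0 b hb, add_zero]
    have : l.1 = 0 := hnd l.1 hall
    rw [Submodule.mem_bot]
    exact Subtype.ext this
  have hfr : finrank ℝ ↥L = finrank ℝ (↥N →ₗ[ℝ] ℝ) := by
    have h1 : finrank ℝ (↥N →ₗ[ℝ] ℝ) = finrank ℝ ↥N :=
      Subspace.dual_finrank_eq
    rw [h1, hdimN]
  let eqv : ↥L ≃ₗ[ℝ] (↥N →ₗ[ℝ] ℝ) := e.linearEquivOfInjective he_inj hfr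
  have heqv : ∀ l : ↥L, eqv l = e l := fun l => rfl
  let r : ↥N →ₗ[ℝ] (↥N →ₗ[ℝ] ℝ) :=
    { toFun := fun x => (-(2⁻¹ : ℝ)) • ((ω x.1).comp N.subtype)
      map_add' := by intro x y; ext n; simp; ring
      map_smul' := by intro c x; ext n; simp; ring }
  let ψ : ↥N →ₗ[ℝ] ↥L := eqv.symm.toLinearMap ∘ₗ r
  have hψdef : ∀ n : ↥N, e (ψ n) = r n := by
    intro n
    show eqv (eqv.symm (r n)) = r n
    exact eqv.apply_symm_apply (r n)
  have hψ : ∀ (x y : ↥N), ω (ψ x).1 y.1 = -(2⁻¹ : ℝ) * ω x.1 y.1 := by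
    intro x y
    have h := LinearMap.congr_fun (hψdef x) y
    simpa [r, smul_eq_mul, he_apply] using h
  let τ : ↥N →ₗ[ℝ] V := N.subtype + L.subtype ∘ₗ ψ
  have hτ : ∀ x : ↥N, τ x = x.1 + (ψ x).1 := fun x => rfl
  have hτinj : Function.Injective τ := by
    rw [← LinearMap.ker_eq_bot, eq_bot_iff]
    intro x hx
    rw [LinearMap.mem_ker, hτ] at hx
    have h1 : x.1 = -((ψ x).1) := eq_neg_of_add_eq_zero_left hx
    have h2 : x.1 ∈ L ⊓ N := by
      constructor
      · rw [h1]; exact Submodule.neg_mem L (ψ x).2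
      · exact x.2
    rw [hLN, Submodule.mem_bot] at h2
    rw [Submodule.mem_bot]
    exact Subtype.ext h2
  refine ⟨LinearMap.range τ, ?_, ?_, ?_, ?_, ?_⟩
  · -- invariance
    rintro g v ⟨x, rfl⟩
    have hx' : ρ g x.1 ∈ N := hNinv g _ x.2
    refine ⟨⟨ρ g x.1, hx'⟩, ?_⟩
    have hcl : ρ g (ψ x).1 ∈ L := hLinv g _ (ψ x).2
    have hkey : (ψ ⟨ρ g x.1, hx'⟩).1 = ρ g (ψ x).1 := by
      have h1 : e (ψ ⟨ρ g x.1, hx'⟩) = e ⟨ρ g (ψ x).1, hcl⟩ := by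
        ext m
        rw [he_apply, he_apply]
        show ω (ψ ⟨ρ g x.1, hx'⟩).1 m.1 = ω (ρ g (ψ x).1) m.1
        have hm : ρ g⁻¹ m.1 ∈ N := hNinv g⁻¹ _ m.2
        have l1 : ω (ρ g (ψ x).1) m.1 = ω (ψ x).1 (ρ g⁻¹ m.1) := hωmove g _ _
        rw [l1, hψ x ⟨_, hm⟩, hψ]
        show -(2⁻¹ : ℝ) * ω (ρ g x.1) m.1 = -(2⁻¹ : ℝ) * ω x.1 (ρ g⁻¹ m.1)
        rw [hωmove g x.1 m.1]
      have h2 := he_inj h1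
      rw [h2]
    rw [hτ, hτ, map_add, hkey]
  · -- Lagrangian
    have hMiso : ∀ a b : ↥N, ω (τ a) (τ b) = 0 := by
      intro a b
      rw [hτ, hτ]
      have h1 : ω (ψ a).1 (ψ b).1 = 0 := (hLlag.ge (ψ a).2) _ (ψ b).2
      have h2 : ω (ψ a).1 b.1 = -(2⁻¹ : ℝ) * ω a.1 b.1 := hψ a b
      have h4 : ω a.1 (ψ b).1 = - ω (ψ b).1 a.1 := hskew _ _
      have h5 : ω (ψ b).1 a.1 = -(2⁻¹ : ℝ) * ω b.1 a.1 := hψ b a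
      have h6 : ω b.1 a.1 = - ω a.1 b.1 := hskew _ _
      simp only [map_add, LinearMap.add_apply]
      linarith [h1, h2, h4, h5, h6]
    have hfrM : finrank ℝ (LinearMap.range τ) = finrank ℝ ↥N :=
      LinearMap.finrank_range_of_inj hτinj
    have hle : LinearMap.range τ ≤ symplOrth ω (LinearMap.range τ) := by
      rintro v ⟨a, rfl⟩
      rw [mem_symplOrth]
      rintro w ⟨b, rfl⟩
      exact hMiso a b
    have hfrO : finrank ℝ (symplOrth ω (LinearMap.range τ)) =
        finrank ℝ V - finrank ℝ (LinearMap.range τ) :=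
      symplOrth_finrank ω halt hnd _
    have hfrle : finrank ℝ (symplOrth ω (LinearMap.range τ)) ≤
        finrank ℝ (LinearMap.range τ) := by
      rw [hfrO, hfrM, hdimN]
      omega
    exact (Submodule.eq_of_le_of_finrank_le hle hfrle).symm
  · -- J ≤ M
    intro j hj
    have hjN : j ∈ N := hJN hj
    set x : ↥N := ⟨j, hjN⟩ with hxdef
    have hψ0 : ψ x = 0 := by
      apply he_inj
      rw [map_zero, hψdef]
      ext m
      show (-(2⁻¹ : ℝ)) • ((ω j) m.1) = 0
      have hmW : m.1 ∈ W := hNW m.2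
      have h1 : ω m.1 j = 0 := by
        rw [hWdef, mem_symplOrth] at hmW
        exact hmW j hj
      have h2 : ω j m.1 = 0 := by
        rw [hskew, h1, neg_zero]
      rw [h2, smul_zero]
    exact ⟨x, by rw [hτ, hψ0]; simp [hxdef]⟩
  · -- L ⊓ M = ⊥
    rw [eq_bot_iff]
    rintro v ⟨hvL, a, rfl⟩
    have h1 : a.1 ∈ L ⊓ N := by
      constructor
      · have h : a.1 = τ a - (ψ a).1 := by rw [hτ]; abel
        rw [h]
        exact Submodule.sub_mem L hvL (ψ a).2
      · exact a.2
    rw [hLN, Submodule.mem_bot] at h1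
    have ha0 : a = 0 := Subtype.ext h1
    rw [Submodule.mem_bot, ha0, map_zero]
  · -- L ⊔ M = ⊤
    rw [eq_top_iff, ← hLsupN]
    apply sup_le le_sup_left
    intro x hx
    have h : x = τ ⟨x, hx⟩ + (-(ψ ⟨x, hx⟩).1) := by rw [hτ]; abel
    rw [h]
    exact Submodule.add_mem _
      (Submodule.mem_sup_right ⟨⟨x, hx⟩, rfl⟩)
      (Submodule.mem_sup_left (Submodule.neg_mem L (ψ ⟨x, hx⟩).2))
end

section
/- Let G be a compact topological group, (V, ω) a symplectic G-space, and L ⊆ V a G-invariant Lagrangian subspace. Equip L × L* with the standard symplectic form ω₀((x,ξ),(y,η)) = η(x) − ξ(y) and the G-action g·(x,ξ) = (g·x, ξ ∘ g⁻¹). Then there exists a G-equivariant linear isomorphism φ : V → L × L* with ω₀(φ v, φ w) = ω(v, w) for all v, w ∈ V and φ(L) = L × {0}. -/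
/-- The standard symplectic form `ω₀((x,ξ),(y,η)) = η x − ξ y` on `L × L*`. -/
def stdForm (L : Type*) [AddCommGroup L] [Module ℝ L] :
    (L × Module.Dual ℝ L) →ₗ[ℝ] (L × Module.Dual ℝ L) →ₗ[ℝ] ℝ :=
  LinearMap.mk₂ ℝ (fun p q => q.2 p.1 - p.2 q.1)
    (fun p p' q => by simp; ring)
    (fun c p q => by simp; ring)
    (fun p q q' => by simp; ring)
    (fun c p q => by simp; ring)

/-- The action of `g : G` on an invariant subspace `L`, obtained by restricting `ρ g`. -/
def resRep {G V : Type*} [Group G] [AddCommGroup V] [Module ℝ V]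
    (ρ : Representation ℝ G V) (L : Submodule ℝ V)
    (hL : ∀ (g : G), ∀ v ∈ L, ρ g v ∈ L) (g : G) : L →ₗ[ℝ] L :=
  (ρ g).restrict (hL g)

open MeasureTheory Module in
theorem exists_equivariant_proj {G E : Type*} [Group G] [TopologicalSpace G]
    [IsTopologicalGroup G] [CompactSpace G]
    [NormedAddCommGroup E] [NormedSpace ℝ E] [FiniteDimensional ℝ E]
    (σ : G → E →ₗ[ℝ] E)
    (hmul : ∀ g h v, σ g (σ h v) = σ (g * h) v) (hone : ∀ v, σ 1 v = v)
    (hσ : Continuous fun p : G × E => σ p.1 p.2)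
    (S : Submodule ℝ E) (hS : ∀ g, ∀ v ∈ S, σ g v ∈ S) :
    ∃ P : E →ₗ[ℝ] E, (∀ v, P v ∈ S) ∧ (∀ v ∈ S, P v = v) ∧
      (∀ g v, P (σ g v) = σ g (P v)) := by
  letI : MeasurableSpace G := borel G
  haveI : BorelSpace G := ⟨rfl⟩
  let K₀ : TopologicalSpace.PositiveCompacts G := ⟨⟨Set.univ, isCompact_univ⟩, by simp⟩
  let μ : Measure G := Measure.haarMeasure K₀
  have h1 : μ Set.univ = 1 := Measure.haarMeasure_self
  haveI : IsProbabilityMeasure μ := ⟨h1⟩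
  -- a (not necessarily equivariant) projection onto S
  obtain ⟨S', hS'⟩ := Submodule.exists_isCompl S
  let q : E →ₗ[ℝ] E := S.subtype ∘ₗ S.linearProjOfIsCompl S' hS'
  have hq1 : ∀ v, q v ∈ S := fun v => (S.linearProjOfIsCompl S' hS' v).2
  have hq2 : ∀ v ∈ S, q v = v := fun v hv => by
    simp [q, Submodule.linearProjOfIsCompl_apply_left hS' ⟨v, hv⟩]
    exact congrArg Subtype.val (Submodule.linearProjOfIsCompl_apply_left hS' ⟨v, hv⟩)
  -- the integrand
  set F : E → G → E := fun v g => σ g (q (σ g⁻¹ v)) with hF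
  have hFc : ∀ v, Continuous (F v) := by
    intro v
    have c1 : Continuous fun g : G => σ g⁻¹ v :=
      hσ.comp ((continuous_inv).prodMk continuous_const)
    have cq : Continuous q := q.continuous_of_finiteDimensional
    exact hσ.comp (continuous_id.prodMk (cq.comp c1))
  have hFi : ∀ v, Integrable (F v) μ :=
    fun v => (hFc v).integrable_of_hasCompactSupport (HasCompactSupport.of_compactSpace _)
  -- the averaged map
  set Pf : E → E := fun v => ∫ g, F v g ∂μ with hPf
  have hadd : ∀ v w, Pf (v + w) = Pf v + Pf w := by
    intro v w
    have : ∀ g, F (v + w) g = F v g + F w g := by intro g; simp [F]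
    rw [hPf]; simp only [this]
    exact integral_add (hFi v) (hFi w)
  have hsmul : ∀ (c : ℝ) v, Pf (c • v) = c • Pf v := by
    intro c v
    have : ∀ g, F (c • v) g = c • F v g := by intro g; simp [F]
    rw [hPf]; simp only [this]
    exact integral_smul c _
  let P : E →ₗ[ℝ] E := ⟨⟨Pf, hadd⟩, hsmul⟩
  refine ⟨P, ?_, ?_, ?_⟩
  · -- range in S
    intro v
    have hmem : ∀ g, F v g ∈ S := fun g => hS g _ (hq1 _)
    have : ∀ ψ : Dual ℝ (E ⧸ S), ψ (S.mkQ (Pf v)) = 0 := by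
      intro ψ
      let f : E →L[ℝ] ℝ := LinearMap.toContinuousLinearMap (ψ ∘ₗ S.mkQ)
      have : f (Pf v) = ∫ g, f (F v g) ∂μ := (ContinuousLinearMap.integral_comp_comm f (hFi v)).symm
      have hz : ∀ g, f (F v g) = 0 := by
        intro g
        have : S.mkQ (F v g) = 0 := (Submodule.Quotient.mk_eq_zero S).2 (hmem g)
        simp only [f, LinearMap.coe_toContinuousLinearMap', LinearMap.comp_apply, this, map_zero]
      simp only [hz, integral_zero] at this
      simpa [f] using this
    have h0 : S.mkQ (Pf v) = 0 := by
      have := (forall_dual_apply_eq_zero_iff ℝ (S.mkQ (Pf v))).1 this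
      exact this
    exact (Submodule.Quotient.mk_eq_zero S).1 h0
  · -- identity on S
    intro v hv
    have : ∀ g, F v g = v := by
      intro g
      have h1' : σ g⁻¹ v ∈ S := hS g⁻¹ v hv
      rw [hF]; simp only
      rw [hq2 _ h1', hmul, mul_inv_cancel, hone]
    show Pf v = v
    rw [hPf]; simp only [this, integral_const, measureReal_def, measure_univ, ENNReal.toReal_one, one_smul]
  · -- equivariance
    intro h v
    show Pf (σ h v) = σ h (Pf v)
    have key : ∀ g, F (σ h v) (h * g) = σ h (F v g) := by
      intro g
      rw [hF]; simp only
      rw [mul_inv_rev, ← hmul g⁻¹ h⁻¹, hmul h⁻¹ h, inv_mul_cancel, hone, hmul]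
    have hinv : ∫ g, F (σ h v) g ∂μ = ∫ g, F (σ h v) (h * g) ∂μ :=
      (integral_mul_left_eq_self (F (σ h v)) h).symm
    rw [hPf]; simp only [hinv, key]
    let T : E →L[ℝ] E := LinearMap.toContinuousLinearMap (σ h)
    have : ∫ g, T (F v g) ∂μ = T (∫ g, F v g ∂μ) := ContinuousLinearMap.integral_comp_comm T (hFi v)
    simpa [T] using this


section Main
variable {G V : Type*} [Group G] [TopologicalSpace G] [IsTopologicalGroup G] [CompactSpace G]
    [AddCommGroup V] [Module ℝ V] [FiniteDimensional ℝ V]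
    [TopologicalSpace V] [IsTopologicalAddGroup V] [ContinuousSMul ℝ V] [T2Space V]

/-- Invariant projection onto an invariant subspace, on `V` itself. -/
theorem exists_equivariant_proj' (ρ : Representation ℝ G V)
    (hcont : Continuous fun p : G × V => ρ p.1 p.2)
    (L : Submodule ℝ V) (hLinv : ∀ (g : G), ∀ v ∈ L, ρ g v ∈ L) :
    ∃ P : V →ₗ[ℝ] V, (∀ v, P v ∈ L) ∧ (∀ v ∈ L, P v = v) ∧
      (∀ g v, P (ρ g v) = ρ g (P v)) := by
  let n := Module.finrank ℝ V
  let E := EuclideanSpace ℝ (Fin n)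
  let e : V ≃ₗ[ℝ] E := LinearEquiv.ofFinrankEq V E (by simp [E, n])
  have hec : Continuous e := e.toLinearMap.continuous_of_finiteDimensional
  have hesc : Continuous e.symm := e.symm.toLinearMap.continuous_of_finiteDimensional
  let σ : G → E →ₗ[ℝ] E := fun g => e.toLinearMap ∘ₗ ρ g ∘ₗ e.symm.toLinearMap
  have hρmul : ∀ (g h : G) (v : V), ρ g (ρ h v) = ρ (g * h) v := by
    intro g h v
    rw [map_mul]; rfl
  have hmul : ∀ g h v, σ g (σ h v) = σ (g * h) v := by
    intro g h v
    simp only [σ, LinearMap.comp_apply, LinearEquiv.coe_coe, LinearEquiv.symm_apply_apply, hρmul]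
  have hone : ∀ v, σ 1 v = v := by intro v; simp [σ]
  have hσ : Continuous fun p : G × E => σ p.1 p.2 := by
    have : (fun p : G × E => σ p.1 p.2)
        = (fun x => e x) ∘ (fun p : G × V => ρ p.1 p.2) ∘ (fun p : G × E => (p.1, e.symm p.2)) := by
      ext p; simp [σ]
    rw [this]
    exact hec.comp (hcont.comp (continuous_fst.prodMk (hesc.comp continuous_snd)))
  obtain ⟨P, hP1, hP2, hP3⟩ := exists_equivariant_proj σ hmul hone hσ (L.map e.toLinearMap)
    (by
      rintro g - ⟨v, hv, rfl⟩
      exact ⟨ρ g v, hLinv g v hv, by simp [σ]⟩)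
  refine ⟨e.symm.toLinearMap ∘ₗ P ∘ₗ e.toLinearMap, ?_, ?_, ?_⟩
  · intro v
    obtain ⟨w, hw, hwe⟩ := hP1 (e v)
    simp only [LinearMap.comp_apply, LinearEquiv.coe_coe] at hwe ⊢
    rw [← hwe]; simpa using hw
  · intro v hv
    simp only [LinearMap.comp_apply]
    rw [hP2 _ ⟨v, hv, rfl⟩]; simp
  · intro g v
    simp only [LinearMap.comp_apply, LinearEquiv.coe_coe]
    have h' : e (ρ g v) = σ g (e v) := by simp [σ]
    rw [h', hP3]
    simp [σ]
end Main

set_option maxHeartbeats 1000000 in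
/-- Let `G` be a compact topological group, `(V, ω)` a symplectic
`G`-space and `L` a `G`-invariant Lagrangian subspace. Then there is a `G`-equivariant
symplectomorphism `φ : V → L × L*` (with the standard form and the action
`g·(x,ξ) = (g·x, ξ ∘ g⁻¹)` on `L × L*`) with `φ(L) = L × {0}`. -/
theorem equivariant_normal_form_lagrangian
    {G V : Type*} [Group G] [TopologicalSpace G] [IsTopologicalGroup G] [CompactSpace G]
    [AddCommGroup V] [Module ℝ V] [FiniteDimensional ℝ V]
    [TopologicalSpace V] [IsTopologicalAddGroup V] [ContinuousSMul ℝ V] [T2Space V]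
    (ρ : Representation ℝ G V)
    (hcont : Continuous fun p : G × V => ρ p.1 p.2)
    (ω : V →ₗ[ℝ] V →ₗ[ℝ] ℝ)
    (halt : ∀ v : V, ω v v = 0)
    (hnd : ∀ v : V, (∀ w : V, ω v w = 0) → v = 0)
    (hωinv : ∀ (g : G) (v w : V), ω (ρ g v) (ρ g w) = ω v w)
    (L : Submodule ℝ V)
    (hLinv : ∀ (g : G), ∀ v ∈ L, ρ g v ∈ L)
    (hLlag : symplOrth ω L = L) :
    ∃ φ : V ≃ₗ[ℝ] L × Module.Dual ℝ L,
      (∀ (g : G) (v : V), φ (ρ g v) =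
        (resRep ρ L hLinv g (φ v).1, (resRep ρ L hLinv g⁻¹).dualMap (φ v).2)) ∧
      (∀ v w : V, stdForm L (φ v) (φ w) = ω v w) ∧
      L.map (φ : V →ₗ[ℝ] L × Module.Dual ℝ L) =
        (⊤ : Submodule ℝ L).prod (⊥ : Submodule ℝ (Module.Dual ℝ L)) := by
  classical
  -- basic identities
  have hρmul : ∀ (g h : G) (v : V), ρ g (ρ h v) = ρ (g * h) v := by
    intro g h v; rw [map_mul]; rfl
  have hρinv : ∀ (g : G) (v : V), ρ g (ρ g⁻¹ v) = v := by
    intro g v; rw [hρmul, mul_inv_cancel, map_one]; rfl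
  have skew : ∀ v w : V, ω v w = - ω w v := by
    intro v w
    have h := halt (v + w)
    simp only [map_add, LinearMap.add_apply, halt v, halt w] at h
    linarith
  -- the invariant projection onto L
  obtain ⟨P, hP1, hP2, hP3⟩ := exists_equivariant_proj' ρ hcont L hLinv
  -- α : V → L*, v ↦ ω(v,·)|L
  let α : V →ₗ[ℝ] Module.Dual ℝ L :=
    { toFun := fun v => (ω v).domRestrict L
      map_add' := fun v w => by ext x; simp
      map_smul' := fun c v => by ext x; simp }
  have hα_apply : ∀ (v : V) (x : L), α v x = ω v x := fun v x => rfl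
  have hkerα : LinearMap.ker α = L := by
    ext v
    simp only [LinearMap.mem_ker]
    constructor
    · intro h
      have hv : v ∈ symplOrth ω L := by
        intro w hw
        simpa [hα_apply] using LinearMap.congr_fun h ⟨w, hw⟩
      rwa [hLlag] at hv
    · intro h
      have hv : v ∈ symplOrth ω L := by rw [hLlag]; exact h
      ext x
      exact hv x x.2
  have hαL : ∀ v ∈ L, α v = 0 := by
    intro v hv
    have : v ∈ LinearMap.ker α := by rw [hkerα]; exact hv
    exact this
  -- α is surjective
  have hαsurj : Function.Surjective α := by
    have hωinj : Function.Injective (ω : V →ₗ[ℝ] Module.Dual ℝ V) := by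
      rw [← LinearMap.ker_eq_bot]
      ext v
      simp only [LinearMap.mem_ker, Submodule.mem_bot]
      constructor
      · intro h; exact hnd v fun w => LinearMap.congr_fun h w
      · rintro rfl; simp
    have hωsurj : Function.Surjective (ω : V →ₗ[ℝ] Module.Dual ℝ V) :=
      (LinearMap.injective_iff_surjective_of_finrank_eq_finrank
        (Subspace.dual_finrank_eq (K := ℝ) (V := V)).symm).1 hωinj
    have hres : Function.Surjective (L.subtype.dualMap) :=
      LinearMap.dualMap_surjective_of_injective L.injective_subtype
    intro ξ
    obtain ⟨ψ, hψ⟩ := hres ξ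
    obtain ⟨v, hv⟩ := hωsurj ψ
    exact ⟨v, by rw [← hψ, ← hv]; rfl⟩
  -- dimension counts
  have hdim : Module.finrank ℝ V = Module.finrank ℝ (Module.Dual ℝ L) + Module.finrank ℝ L := by
    have := LinearMap.finrank_range_add_finrank_ker α
    rw [hkerα, LinearMap.range_eq_top.2 hαsurj, finrank_top] at this
    omega
  -- the invariant complement W = ker P, and the projection pL onto L
  set W : Submodule ℝ V := LinearMap.ker P with hW
  have hWmem : ∀ v, v ∈ W ↔ P v = 0 := fun v => LinearMap.mem_ker
  have hVW : ∀ v : V, v - P v ∈ W := by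
    intro v
    rw [hWmem, map_sub, hP2 _ (hP1 v), sub_self]
  have hLW : ∀ v, v ∈ L → v ∈ W → v = 0 := by
    intro v hvL hvW
    rw [← hP2 v hvL]
    exact (hWmem v).1 hvW
  let pL : V →ₗ[ℝ] L := P.codRestrict L hP1
  have hpL : ∀ v, (pL v : V) = P v := fun v => rfl
  -- α restricted to W is an isomorphism onto L*
  let αW : W →ₗ[ℝ] Module.Dual ℝ L := α ∘ₗ W.subtype
  have hαWinj : Function.Injective αW := by
    rw [← LinearMap.ker_eq_bot]
    ext w
    simp only [LinearMap.mem_ker, Submodule.mem_bot, αW, LinearMap.comp_apply]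
    constructor
    · intro h
      have hwL : (w : V) ∈ L := by
        rw [← hkerα]; exact h
      exact Subtype.ext (hLW w hwL w.2)
    · rintro rfl; simp
  have hdimW : Module.finrank ℝ W = Module.finrank ℝ (Module.Dual ℝ L) := by
    have hsur : Function.Surjective pL := by
      intro x
      exact ⟨(x : V), Subtype.ext (by rw [hpL, hP2 _ x.2])⟩
    have h2 := LinearMap.finrank_range_add_finrank_ker pL
    have hker : LinearMap.ker pL = W := by
      ext v
      simp only [LinearMap.mem_ker, hW]
      constructor
      · intro h; exact (Submodule.mk_eq_zero _ _).1 (by exact h)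
      · intro h; exact Subtype.ext h
    rw [hker, LinearMap.range_eq_top.2 hsur, finrank_top] at h2
    omega
  let mE : W ≃ₗ[ℝ] Module.Dual ℝ L := LinearMap.linearEquivOfInjective αW hαWinj hdimW
  let m : Module.Dual ℝ L →ₗ[ℝ] V := W.subtype ∘ₗ (mE.symm : Module.Dual ℝ L →ₗ[ℝ] W)
  have hmW : ∀ ξ, m ξ ∈ W := fun ξ => (mE.symm ξ).2
  have hαm : ∀ ξ, α (m ξ) = ξ := by
    intro ξ
    have : αW (mE.symm ξ) = ξ := by
      have := mE.apply_symm_apply ξ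
      rwa [show ∀ w, mE w = αW w from fun w => LinearMap.linearEquivOfInjective_apply _ _ _] at this
    exact this
  have hmα : ∀ v, m (α v) = v - P v := by
    intro v
    have h1 : α (v - P v) = α v := by
      rw [map_sub, hαL _ (hP1 v), sub_zero]
    have h2 : αW ⟨v - P v, hVW v⟩ = α v := h1
    have h3 : mE ⟨v - P v, hVW v⟩ = α v := by
      rw [show ∀ w, mE w = αW w from fun w => LinearMap.linearEquivOfInjective_apply _ _ _]
      exact h2
    have : mE.symm (α v) = ⟨v - P v, hVW v⟩ := by rw [← h3, mE.symm_apply_apply]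
    show W.subtype (mE.symm (α v)) = v - P v
    rw [this]; rfl
  -- the correction C : L* → L
  let τ : Module.Dual ℝ L →ₗ[ℝ] Module.Dual ℝ L →ₗ[ℝ] ℝ :=
    LinearMap.mk₂ ℝ (fun ξ η => (1/2) * ω (m ξ) (m η))
      (fun ξ ξ' η => by simp [map_add]; ring)
      (fun c ξ η => by simp; ring)
      (fun ξ η η' => by simp [map_add]; ring)
      (fun c ξ η => by simp; ring)
  let C : Module.Dual ℝ L →ₗ[ℝ] L :=
    (Module.evalEquiv ℝ L).symm.toLinearMap ∘ₗ τ.flip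
  have hC : ∀ ξ η, ξ (C η) = (1/2) * ω (m ξ) (m η) := by
    intro ξ η
    show ξ ((Module.evalEquiv ℝ L).symm (τ.flip η)) = _
    rw [Module.apply_evalEquiv_symm_apply]
    rfl
  -- the candidate map
  let π : V →ₗ[ℝ] L := pL + C ∘ₗ α
  let φ₀ : V →ₗ[ℝ] L × Module.Dual ℝ L := π.prod (-α)
  have hφ₀ : ∀ v, φ₀ v = (pL v + C (α v), -(α v)) := fun v => rfl
  have hφ₀inj : Function.Injective φ₀ := by
    rw [← LinearMap.ker_eq_bot]
    ext v
    simp only [LinearMap.mem_ker, Submodule.mem_bot]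
    constructor
    · intro h
      have h2 : α v = 0 := by
        have := congrArg Prod.snd h
        simp only [hφ₀] at this ⊢
        simpa [neg_eq_zero] using this
      have hvL : v ∈ L := by rw [← hkerα]; exact h2
      have h1 : pL v + C (α v) = 0 := congrArg Prod.fst h
      rw [h2, map_zero, add_zero] at h1
      have : P v = 0 := congrArg (Submodule.subtype L) h1
      rw [← hP2 v hvL, this]
    · rintro rfl; simp [hφ₀]
  have hdimprod : Module.finrank ℝ V = Module.finrank ℝ (L × Module.Dual ℝ L) := by
    rw [Module.finrank_prod]
    omega
  let φ : V ≃ₗ[ℝ] L × Module.Dual ℝ L :=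
    LinearMap.linearEquivOfInjective φ₀ hφ₀inj hdimprod
  have hφ : ∀ v, φ v = (pL v + C (α v), -(α v)) :=
    fun v => LinearMap.linearEquivOfInjective_apply _ _ _
  -- equivariance lemmas
  have hρinv' : ∀ (g : G) (v : V), ρ g⁻¹ (ρ g v) = v := by
    intro g v; rw [hρmul, inv_mul_cancel, map_one]; rfl
  have hresinv : ∀ (g : G) (x : L), resRep ρ L hLinv g (resRep ρ L hLinv g⁻¹ x) = x := by
    intro g x
    apply Subtype.ext
    exact hρinv g (x : V)
  have hαequiv : ∀ (g : G) (v : V),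
      α (ρ g v) = (resRep ρ L hLinv g⁻¹).dualMap (α v) := by
    intro g v
    ext x
    show ω (ρ g v) (x : V) = ω v (ρ g⁻¹ (x : V))
    have h := hωinv g v (ρ g⁻¹ (x : V))
    rw [hρinv] at h
    exact h
  have hDinv : ∀ (g : G) (ξ : Module.Dual ℝ L),
      (resRep ρ L hLinv g⁻¹).dualMap ((resRep ρ L hLinv g).dualMap ξ) = ξ := by
    intro g ξ
    ext x
    show ξ (resRep ρ L hLinv g (resRep ρ L hLinv g⁻¹ x)) = ξ x
    rw [hresinv]
  have hαWinj' : ∀ x y : V, x ∈ W → y ∈ W → α x = α y → x = y := by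
    intro x y hx hy h
    have := hαWinj (a₁ := ⟨x, hx⟩) (a₂ := ⟨y, hy⟩) (by exact h)
    exact congrArg Subtype.val this
  have hρW : ∀ (g : G) (w : V), w ∈ W → ρ g w ∈ W := by
    intro g w hw
    rw [hWmem, hP3, (hWmem w).1 hw, map_zero]
  have hmequiv : ∀ (g : G) (ξ : Module.Dual ℝ L),
      m ((resRep ρ L hLinv g⁻¹).dualMap ξ) = ρ g (m ξ) := by
    intro g ξ
    apply hαWinj' _ _ (hmW _) (hρW g _ (hmW ξ))
    rw [hαm, hαequiv g (m ξ), hαm]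
  have hCequiv : ∀ (g : G) (η : Module.Dual ℝ L),
      C ((resRep ρ L hLinv g⁻¹).dualMap η) = resRep ρ L hLinv g (C η) := by
    intro g η
    have hall : ∀ ξ : Module.Dual ℝ L,
        ξ (C ((resRep ρ L hLinv g⁻¹).dualMap η)) = ξ (resRep ρ L hLinv g (C η)) := by
      intro ξ
      set ξ' := (resRep ρ L hLinv g).dualMap ξ with hξ'
      have hmξ : m ξ = ρ g (m ξ') := by
        rw [← hmequiv g ξ', hξ', hDinv]
      rw [hC, hmequiv g η, hmξ, hωinv]
      have : ξ (resRep ρ L hLinv g (C η)) = ξ' (C η) := rfl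
      rw [this, hC]
    have hz : ∀ ξ : Module.Dual ℝ L,
        ξ (C ((resRep ρ L hLinv g⁻¹).dualMap η) - resRep ρ L hLinv g (C η)) = 0 := by
      intro ξ
      rw [map_sub, hall, sub_self]
    have := (Module.forall_dual_apply_eq_zero_iff ℝ
      (C ((resRep ρ L hLinv g⁻¹).dualMap η) - resRep ρ L hLinv g (C η))).1 hz
    exact sub_eq_zero.1 this
  refine ⟨φ, ?_, ?_, ?_⟩
  · -- equivariance
    intro g v
    rw [hφ (ρ g v), hφ v]
    apply Prod.ext
    · show pL (ρ g v) + C (α (ρ g v))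
        = resRep ρ L hLinv g (pL v + C (α v))
      apply Subtype.ext
      show P (ρ g v) + (C (α (ρ g v)) : V) = ρ g ((pL v : V) + (C (α v) : V))
      rw [hP3, hαequiv, hCequiv, map_add]
      rfl
    · show -(α (ρ g v)) = (resRep ρ L hLinv g⁻¹).dualMap (-(α v))
      rw [hαequiv, map_neg]
  · -- symplectomorphism property
    intro v w
    have hPP : ω (P v) (P w) = 0 := by
      have hmem : P v ∈ symplOrth ω L := by rw [hLlag]; exact hP1 v
      exact hmem (P w) (hP1 w)
    have hexp : ω (v - P v) (w - P w)
        = ω v w - ω v (P w) - ω (P v) w + ω (P v) (P w) := by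
      simp only [map_sub, LinearMap.sub_apply]; ring
    have e1 : α v (pL w) = ω v (P w) := rfl
    have e2 : α w (pL v) = ω w (P v) := rfl
    have e3 : α v (C (α w)) = (1/2) * ω (v - P v) (w - P w) := by
      rw [hC, hmα, hmα]
    have e4 : α w (C (α v)) = (1/2) * ω (w - P w) (v - P v) := by
      rw [hC, hmα, hmα]
    have e5 : ω (w - P w) (v - P v) = - ω (v - P v) (w - P w) := skew _ _
    have e6 : ω (P v) w = - ω w (P v) := skew _ _
    have h1 : stdForm L (φ v) (φ w)
        = α v (pL w) + α v (C (α w)) - (α w (pL v) + α w (C (α v))) := by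
      rw [hφ v, hφ w]
      show (-(α w)) (pL v + C (α v)) - (-(α v)) (pL w + C (α w)) = _
      simp only [LinearMap.neg_apply, map_add]
      ring
    rw [h1, e1, e2, e3, e4]
    linarith [hexp, hPP, e6, e5]
  · -- image of L
    have hcoe : (φ : V →ₗ[ℝ] L × Module.Dual ℝ L) = φ₀ := by
      apply LinearMap.ext
      intro v
      exact hφ v
    rw [hcoe]
    ext p
    obtain ⟨y, η⟩ := p
    simp only [Submodule.mem_map, Submodule.mem_prod, Submodule.mem_top,
      Submodule.mem_bot, true_and]
    constructor
    · rintro ⟨v, hv, hveq⟩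
      rw [hφ₀ v] at hveq
      have := congrArg Prod.snd hveq
      simp only at this
      rw [← this, hαL v hv, neg_zero]
    · intro hη
      refine ⟨(y : V), y.2, ?_⟩
      have hα0 : α (y : V) = 0 := hαL _ y.2
      rw [hφ₀]
      apply Prod.ext
      · show pL (y : V) + C (α (y : V)) = y
        rw [hα0, map_zero, add_zero]
        apply Subtype.ext
        exact hP2 _ y.2
      · show -(α (y : V)) = η
        rw [hα0, neg_zero, hη]
end

section
/- Let (X, ω_X), (Y, ω_Y), (Z, ω_Z) be symplectic vector spaces, f a Lagrangian subspace of X × Y with the form ω_X ⊕ (−ω_Y), and g a Lagrangian subspace of Y × Z with the form ω_Y ⊕ (−ω_Z). Then the set-theoretic composition f ∘ g = {(x,z) : ∃ y ∈ Y, (x,y) ∈ f and (y,z) ∈ g} is a Lagrangian subspace of X × Z with the form ω_X ⊕ (−ω_Z). -/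
/-- The form `ω_X ⊕ (−ω_Y)` on the product `X × Y`. -/
def prodFormNeg {X Y : Type*} [AddCommGroup X] [Module ℝ X] [AddCommGroup Y] [Module ℝ Y]
    (ωX : X →ₗ[ℝ] X →ₗ[ℝ] ℝ) (ωY : Y →ₗ[ℝ] Y →ₗ[ℝ] ℝ) :
    (X × Y) →ₗ[ℝ] (X × Y) →ₗ[ℝ] ℝ :=
  LinearMap.mk₂ ℝ (fun p q => ωX p.1 q.1 - ωY p.2 q.2)
    (fun p p' q => by simp; ring)
    (fun c p q => by simp; ring)
    (fun p q q' => by simp; ring)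
    (fun c p q => by simp; ring)

/-- Set-theoretic composition of linear relations:
`f ∘ g = {(x, z) : ∃ y, (x, y) ∈ f ∧ (y, z) ∈ g}`. -/
def relComp {X Y Z : Type*} [AddCommGroup X] [Module ℝ X] [AddCommGroup Y] [Module ℝ Y]
    [AddCommGroup Z] [Module ℝ Z]
    (f : Submodule ℝ (X × Y)) (g : Submodule ℝ (Y × Z)) : Submodule ℝ (X × Z) where
  carrier := {p | ∃ y : Y, (p.1, y) ∈ f ∧ (y, p.2) ∈ g}
  zero_mem' := ⟨0, by exact f.zero_mem, by exact g.zero_mem⟩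
  add_mem' := by
    rintro p q ⟨y, hy1, hy2⟩ ⟨y', hy'1, hy'2⟩
    exact ⟨y + y', by simpa [Prod.mk_add_mk] using f.add_mem hy1 hy'1,
      by simpa [Prod.mk_add_mk] using g.add_mem hy2 hy'2⟩
  smul_mem' := by
    rintro c p ⟨y, hy1, hy2⟩
    exact ⟨c • y, by simpa [Prod.smul_mk] using f.smul_mem c hy1,
      by simpa [Prod.smul_mk] using g.smul_mem c hy2⟩

section SymplAux

open LinearMap (BilinForm)

variable {V : Type*} [AddCommGroup V] [Module ℝ V]

/-- For a reflexive form, `symplOrth` agrees with mathlib's `BilinForm.orthogonal`. -/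
lemma symplOrth_eq_orthogonal_s11 (ω : BilinForm ℝ V) (hr : ω.IsRefl) (W : Submodule ℝ V) :
    symplOrth ω W = ω.orthogonal W := by
  ext v
  constructor
  · intro hv w hw
    exact hr v w (hv w hw)
  · intro hv w hw
    exact hr w v (hv w hw)

lemma orthogonal_sup' (ω : BilinForm ℝ V) (A B : Submodule ℝ V) :
    ω.orthogonal (A ⊔ B) = ω.orthogonal A ⊓ ω.orthogonal B := by
  refine le_antisymm
    (le_inf (ω.orthogonal_le le_sup_left) (ω.orthogonal_le le_sup_right)) ?_
  rintro v ⟨hA, hB⟩ n hn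
  obtain ⟨a, ha, b, hb, rfl⟩ := Submodule.mem_sup.mp hn
  have h1 : ω a v = 0 := hA a ha
  have h2 : ω b v = 0 := hB b hb
  show ω (a + b) v = 0
  rw [map_add, LinearMap.add_apply, h1, h2, add_zero]

lemma orthogonal_inf' [FiniteDimensional ℝ V] (ω : BilinForm ℝ V)
    (hnd : ω.Nondegenerate) (hr : ω.IsRefl) (A B : Submodule ℝ V) :
    ω.orthogonal (A ⊓ B) = ω.orthogonal A ⊔ ω.orthogonal B := by
  rw [← ω.orthogonal_orthogonal hnd hr (ω.orthogonal A ⊔ ω.orthogonal B), orthogonal_sup',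
    ω.orthogonal_orthogonal hnd hr, ω.orthogonal_orthogonal hnd hr]

end SymplAux

/-- The set-theoretic composition of two linear canonical relations
(Lagrangian subspaces of `X × Y` resp. `Y × Z` with the forms `ω_X ⊕ (−ω_Y)` resp.
`ω_Y ⊕ (−ω_Z)`) is a Lagrangian subspace of `X × Z` with the form `ω_X ⊕ (−ω_Z)`. -/
theorem relComp_lagrangian
    {X Y Z : Type*} [AddCommGroup X] [Module ℝ X] [FiniteDimensional ℝ X]
    [AddCommGroup Y] [Module ℝ Y] [FiniteDimensional ℝ Y]
    [AddCommGroup Z] [Module ℝ Z] [FiniteDimensional ℝ Z]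
    (ωX : X →ₗ[ℝ] X →ₗ[ℝ] ℝ) (ωY : Y →ₗ[ℝ] Y →ₗ[ℝ] ℝ) (ωZ : Z →ₗ[ℝ] Z →ₗ[ℝ] ℝ)
    (haltX : ∀ v : X, ωX v v = 0) (hndX : ∀ v : X, (∀ w : X, ωX v w = 0) → v = 0)
    (haltY : ∀ v : Y, ωY v v = 0) (hndY : ∀ v : Y, (∀ w : Y, ωY v w = 0) → v = 0)
    (haltZ : ∀ v : Z, ωZ v v = 0) (hndZ : ∀ v : Z, (∀ w : Z, ωZ v w = 0) → v = 0)
    (f : Submodule ℝ (X × Y)) (g : Submodule ℝ (Y × Z))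
    (hf : symplOrth (prodFormNeg ωX ωY) f = f)
    (hg : symplOrth (prodFormNeg ωY ωZ) g = g) :
    symplOrth (prodFormNeg ωX ωZ) (relComp f g) = relComp f g := by
  classical
  -- skew-symmetry of the component forms
  have hsX : ∀ a b : X, ωX a b = -ωX b a := fun a b => (LinearMap.IsAlt.neg haltX b a).symm
  have hsY : ∀ a b : Y, ωY a b = -ωY b a := fun a b => (LinearMap.IsAlt.neg haltY b a).symm
  have hsZ : ∀ a b : Z, ωZ a b = -ωZ b a := fun a b => (LinearMap.IsAlt.neg haltZ b a).symm
  set ωf := prodFormNeg ωX ωY with hωfdef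
  set ωg := prodFormNeg ωY ωZ with hωgdef
  have ωfapp : ∀ p q : X × Y, ωf p q = ωX p.1 q.1 - ωY p.2 q.2 := fun p q => rfl
  have ωgapp : ∀ p q : Y × Z, ωg p q = ωY p.1 q.1 - ωZ p.2 q.2 := fun p q => rfl
  -- the big form on (X × Y) × (Y × Z)
  set Ω := prodFormNeg ωf (-ωg) with hΩdef
  have Ωapp : ∀ p q : (X × Y) × (Y × Z), Ω p q = ωf p.1 q.1 + ωg p.2 q.2 := by
    intro p q
    show ωf p.1 q.1 - (-ωg) p.2 q.2 = _
    simp [sub_neg_eq_add]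
  -- alternation / reflexivity
  have haltf : ∀ p : X × Y, ωf p p = 0 := fun p => by
    rw [ωfapp, haltX, haltY, sub_zero]
  have haltg : ∀ p : Y × Z, ωg p p = 0 := fun p => by
    rw [ωgapp, haltY, haltZ, sub_zero]
  have haltΩ : ∀ p : (X × Y) × (Y × Z), Ω p p = 0 := fun p => by
    rw [Ωapp, haltf, haltg, add_zero]
  have hrf : ωf.IsRefl := LinearMap.IsAlt.isRefl haltf
  have hrg : ωg.IsRefl := LinearMap.IsAlt.isRefl haltg
  have hrΩ : Ω.IsRefl := LinearMap.IsAlt.isRefl haltΩ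
  -- nondegeneracy
  have hndΩ : LinearMap.BilinForm.Nondegenerate Ω := by
    refine hrΩ.nondegenerate_iff_separatingLeft.mpr ?_
    rintro ⟨⟨x, y⟩, ⟨u, z⟩⟩ h
    have hx : x = 0 := hndX x fun w => by
      have := h ((w, 0), (0, 0)); rw [Ωapp, ωfapp, ωgapp] at this; simpa using this
    have hy : y = 0 := by
      refine hndY y fun w => ?_
      have := h ((0, w), (0, 0)); rw [Ωapp, ωfapp, ωgapp] at this
      simp only [map_zero, LinearMap.zero_apply] at this
      linarith
    have hu : u = 0 := hndY u fun w => by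
      have := h ((0, 0), (w, 0)); rw [Ωapp, ωfapp, ωgapp] at this; simpa using this
    have hz : z = 0 := by
      refine hndZ z fun w => ?_
      have := h ((0, 0), (0, w)); rw [Ωapp, ωfapp, ωgapp] at this
      simp only [map_zero, LinearMap.zero_apply] at this
      linarith
    simp [hx, hy, hu, hz, Prod.ext_iff]
  -- the relevant subspaces of the big space
  set L : Submodule ℝ ((X × Y) × (Y × Z)) := f.prod g with hLdef
  set kmap : Y →ₗ[ℝ] (X × Y) × (Y × Z) :=
    ((0 : Y →ₗ[ℝ] X).prod LinearMap.id).prod ((LinearMap.id : Y →ₗ[ℝ] Y).prod 0) with hkdef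
  have kapp : ∀ y : Y, kmap y = ((0, y), (y, 0)) := fun y => rfl
  set K : Submodule ℝ ((X × Y) × (Y × Z)) := LinearMap.range kmap with hKdef
  -- L is Lagrangian for Ω
  have hforth : LinearMap.BilinForm.orthogonal ωf f = f := by rw [← symplOrth_eq_orthogonal_s11 ωf hrf]; exact hf
  have hgorth : LinearMap.BilinForm.orthogonal ωg g = g := by rw [← symplOrth_eq_orthogonal_s11 ωg hrg]; exact hg
  have hLorth : LinearMap.BilinForm.orthogonal Ω L = L := by
    ext ⟨p, q⟩
    constructor
    · intro hv
      constructor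
      · rw [← hforth]
        intro p' hp'
        have h' : Ω (p', 0) (p, q) = 0 := hv (p', 0) ⟨hp', g.zero_mem⟩
        rw [Ωapp] at h'
        show ωf p' (p, q).1 = 0
        simpa using h'
      · rw [← hgorth]
        intro q' hq'
        have h' : Ω (0, q') (p, q) = 0 := hv (0, q') ⟨f.zero_mem, hq'⟩
        rw [Ωapp] at h'
        show ωg q' (p, q).2 = 0
        simpa using h'
    · rintro ⟨hp, hq⟩ ⟨p', q'⟩ ⟨hp', hq'⟩
      show Ω (p', q') (p, q) = 0
      rw [Ωapp]
      rw [← hforth] at hp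
      rw [← hgorth] at hq
      have h1 : ωf p' p = 0 := hp p' hp'
      have h2 : ωg q' q = 0 := hq q' hq'
      simpa using by rw [show (ωf (p', q').1) (p, q).1 = 0 from h1,
        show (ωg (p', q').2) (p, q).2 = 0 from h2, add_zero]
  -- the key identity: Ω-orthogonal of L ⊓ Ω-orthogonal K equals L ⊔ K
  have hkey : LinearMap.BilinForm.orthogonal Ω (L ⊓ LinearMap.BilinForm.orthogonal Ω K) = L ⊔ K := by
    rw [orthogonal_inf' Ω hndΩ hrΩ, hLorth, LinearMap.BilinForm.orthogonal_orthogonal hndΩ hrΩ]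
  -- now prove the statement
  apply le_antisymm
  · -- hard direction: the orthogonal of the composition is contained in the composition
    rintro ⟨x, z⟩ hxz
    have hv : ((x, (0 : Y)), ((0 : Y), z)) ∈ LinearMap.BilinForm.orthogonal Ω (L ⊓ LinearMap.BilinForm.orthogonal Ω K) := by
      rintro ⟨⟨x', y'⟩, ⟨u', z'⟩⟩ ⟨⟨hf', hg'⟩, hΔ⟩
      -- from membership in the orthogonal of K, deduce u' = y'
      have huy : u' = y' := by
        have hw : ∀ w : Y, ωY w (u' - y') = 0 := by
          intro w
          have h' : Ω ((0, w), (w, 0)) ((x', y'), (u', z')) = 0 := hΔ (kmap w) ⟨w, rfl⟩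
          rw [Ωapp, ωfapp, ωgapp] at h'
          simp only [map_zero, LinearMap.zero_apply] at h'
          rw [map_sub]
          linarith
        have : u' - y' = 0 := by
          refine hndY _ fun w => ?_
          rw [hsY]; rw [hw w]; ring
        exact sub_eq_zero.mp this
      subst huy
      have hmem : ((x', z') : X × Z) ∈ relComp f g := ⟨u', hf', hg'⟩
      have h0 : ωX x x' - ωZ z z' = 0 := hxz (x', z') hmem
      show Ω ((x', u'), (u', z')) ((x, 0), (0, z)) = 0
      rw [Ωapp, ωfapp, ωgapp]
      simp only [map_zero, LinearMap.zero_apply, sub_zero, zero_sub]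
      rw [hsX x' x, hsZ z' z]
      linarith
    rw [hkey] at hv
    obtain ⟨l, hl, m, hm, hlm⟩ := Submodule.mem_sup.mp hv
    obtain ⟨w, rfl⟩ := hm
    have hl' : l = ((x, -w), (-w, z)) := by
      have : l = ((x, (0 : Y)), ((0 : Y), z)) - kmap w := by
        rw [← hlm]; abel
      rw [this, kapp]
      simp [Prod.ext_iff]
    rw [hl'] at hl
    exact ⟨-w, hl.1, hl.2⟩
  · -- easy direction: the composition is isotropic
    rintro ⟨x, z⟩ ⟨y, hxy, hyz⟩ ⟨x', z'⟩ ⟨y', hxy', hyz'⟩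
    have h1 : ωf (x, y) (x', y') = 0 := by
      rw [← hf] at hxy; exact hxy (x', y') hxy'
    have h2 : ωg (y, z) (y', z') = 0 := by
      rw [← hg] at hyz; exact hyz (y', z') hyz'
    rw [ωfapp] at h1; rw [ωgapp] at h2
    show ωX x x' - ωZ z z' = 0
    simp only at h1 h2
    linarith
end
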